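/- Let p be an odd prime and a, b ≥ 0 integers with a + b < p. Then in F_p(x) one has S_{a,b}(x) − G_{a,b}(x) = (1/(x(x−1)))·f(x,…,x) − (1/(x−1))·S_{a−1,b}(x) + (1/x)·G_{a,b−1}(x), where f(x,…,x) has a+b copies of x. -/

import Mathlib

/-- `f(x₁, …, x_d) = ∑_{0 < n₁ < ⋯ < n_d < p} 1/((n₁ - x₁) ⋯ (n_d - x_d))` in the rational
function field `𝔽_p(x)`; `f` of the empty tuple is `1`. -/
noncomputable def f (p : ℕ) [Fact p.Prime] {d : ℕ} (x : Fin d → RatFunc (ZMod p)) :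
    RatFunc (ZMod p) :=
  ∑ n ∈ Finset.univ.filter
      (fun n : Fin d → Fin p => (∀ i j : Fin d, i < j → n i < n j) ∧ ∀ i, (n i : ℕ) ≠ 0),
    ∏ i, (((n i : ℕ) : RatFunc (ZMod p)) - x i)⁻¹

/-- `G_{a,b}`, as a function of the substituted variable `t`: for `a, b ≥ 0` it is
`f(t,…,t,2t,t,…,t)` with `a` copies of `t` before `2t` and `b` copies after;
for `a = -1` or `b = -1` it is `(1/2)·f(t,…,t)` with `a+b+1` copies of `t`. -/
noncomputable def G (p : ℕ) [Fact p.Prime] (a b : ℤ) (t : RatFunc (ZMod p)) :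
    RatFunc (ZMod p) :=
  if 0 ≤ a ∧ 0 ≤ b then
    f p (fun i : Fin (a + b + 1).toNat => if (i : ℤ) = a then 2 * t else t)
  else (1 / 2) * f p (fun _ : Fin (a + b + 1).toNat => t)

/-- `S_{a,b}`, as a function of the substituted variable `t`: for `a, b ≥ 0` it is
`f(t,…,t,2t-1,t,…,t)` with `a` copies of `t` before `2t-1` and `b` copies after;
for `a = -1` or `b = -1` it is `(t/(2t-1))·f(t,…,t)` with `a+b+1` copies of `t`. -/
noncomputable def S (p : ℕ) [Fact p.Prime] (a b : ℤ) (t : RatFunc (ZMod p)) :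
    RatFunc (ZMod p) :=
  if 0 ≤ a ∧ 0 ≤ b then
    f p (fun i : Fin (a + b + 1).toNat => if (i : ℤ) = a then 2 * t - 1 else t)
  else (t / (2 * t - 1)) * f p (fun _ : Fin (a + b + 1).toNat => t)

variable (p : ℕ) [Fact p.Prime]


noncomputable def D : ℕ → ℕ → List (RatFunc (ZMod p)) → RatFunc (ZMod p)
  | _, _, [] => 1
  | lo, hi, c :: cs => ∑ m ∈ Finset.Ico (lo + 1) hi, ((m : RatFunc (ZMod p)) - c)⁻¹ * D m hi cs

@[simp] lemma D_nil (lo hi : ℕ) : D p lo hi [] = 1 := rfl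

lemma D_cons (lo hi : ℕ) (c : RatFunc (ZMod p)) (cs : List (RatFunc (ZMod p))) :
    D p lo hi (c :: cs) = ∑ m ∈ Finset.Ico (lo + 1) hi, ((m : RatFunc (ZMod p)) - c)⁻¹ * D p m hi cs := rfl

noncomputable def fAux (lo : ℕ) {d : ℕ} (x : Fin d → RatFunc (ZMod p)) : RatFunc (ZMod p) :=
  ∑ n ∈ Finset.univ.filter
      (fun n : Fin d → Fin p => (∀ i j : Fin d, i < j → n i < n j) ∧ ∀ i, lo < (n i : ℕ)),
    ∏ i, (((n i : ℕ) : RatFunc (ZMod p)) - x i)⁻¹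

lemma f_eq_fAux {d : ℕ} (x : Fin d → RatFunc (ZMod p)) : f p x = fAux p 0 x := by
  unfold f fAux
  congr 1
  apply Finset.filter_congr
  intro n _
  simp [Nat.pos_iff_ne_zero]

lemma ite_and_mul {M : Type*} [MulZeroClass M] (A B : Prop) [Decidable A] [Decidable B] (c g : M) :
    (if A ∧ B then c * g else 0) = if A then c * (if B then g else 0) else 0 := by
  split_ifs <;> simp_all

lemma cons_cond {d : ℕ} (lo : ℕ) (k : Fin p) (t : Fin d → Fin p) :
    ((∀ i j : Fin (d+1), i < j → (Fin.cons k t : Fin (d+1) → Fin p) i < (Fin.cons k t : Fin (d+1) → Fin p) j)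
        ∧ ∀ i, lo < (((Fin.cons k t : Fin (d+1) → Fin p) i : Fin p) : ℕ))
    ↔ (lo < (k:ℕ) ∧ ((∀ i j : Fin d, i < j → t i < t j) ∧ ∀ i, (k:ℕ) < ((t i : Fin p) : ℕ))) := by
  constructor
  · rintro ⟨h1, h2⟩
    refine ⟨?_, fun i j hij => ?_, fun i => ?_⟩
    · have := h2 0
      rwa [Fin.cons_zero] at this
    · have := h1 i.succ j.succ (Fin.succ_lt_succ_iff.mpr hij)
      rwa [Fin.cons_succ, Fin.cons_succ] at this
    · have := h1 0 i.succ (Fin.succ_pos i)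
      rw [Fin.cons_zero, Fin.cons_succ] at this
      exact this
  · rintro ⟨hk, hmono, hgt⟩
    constructor
    · intro i j hij
      induction j using Fin.cases with
      | zero => exact absurd hij (Fin.not_lt_zero _)
      | succ j =>
        induction i using Fin.cases with
        | zero =>
          rw [Fin.cons_zero, Fin.cons_succ]
          exact hgt j
        | succ i =>
          rw [Fin.cons_succ, Fin.cons_succ]
          exact hmono i j (Fin.succ_lt_succ_iff.mp hij)
    · intro i
      induction i using Fin.cases with
      | zero =>
        rw [Fin.cons_zero]
        exact hk
      | succ i =>
        rw [Fin.cons_succ]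
        exact lt_trans hk (hgt i)

set_option maxHeartbeats 1000000 in
lemma fAux_eq_D : ∀ {d : ℕ} (lo : ℕ) (x : Fin d → RatFunc (ZMod p)),
    fAux p lo x = D p lo p (List.ofFn x) := by
  intro d
  induction d with
  | zero =>
    intro lo x
    simp [fAux]
  | succ d ih =>
    intro lo x
    calc fAux p lo x
        = ∑ n : Fin (d+1) → Fin p,
            if ((∀ i j : Fin (d+1), i < j → n i < n j) ∧ ∀ i, lo < ((n i : Fin p) : ℕ))
            then ∏ i, (((n i : ℕ) : RatFunc (ZMod p)) - x i)⁻¹ else 0 := by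
          rw [fAux, Finset.sum_filter]
      _ = ∑ q : Fin p × (Fin d → Fin p),
            (fun n : Fin (d+1) → Fin p =>
              if ((∀ i j : Fin (d+1), i < j → n i < n j) ∧ ∀ i, lo < ((n i : Fin p) : ℕ))
              then ∏ i, (((n i : ℕ) : RatFunc (ZMod p)) - x i)⁻¹ else 0)
            (Fin.cons q.1 q.2) := by
          refine (Fintype.sum_equiv (Fin.consEquiv (fun _ : Fin (d+1) => Fin p)) _ _ fun q => ?_).symm
          obtain ⟨k, t⟩ := q
          rfl
      _ = ∑ k : Fin p, ∑ t : Fin d → Fin p,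
            (fun n : Fin (d+1) → Fin p =>
              if ((∀ i j : Fin (d+1), i < j → n i < n j) ∧ ∀ i, lo < ((n i : Fin p) : ℕ))
              then ∏ i, (((n i : ℕ) : RatFunc (ZMod p)) - x i)⁻¹ else 0)
            (Fin.cons k t) :=
          Fintype.sum_prod_type _
      _ = ∑ k : Fin p,
            if lo < (k:ℕ) then (((k:ℕ) : RatFunc (ZMod p)) - x 0)⁻¹ * fAux p (k:ℕ) (fun i => x i.succ)
            else 0 := by
          refine Finset.sum_congr rfl fun k _ => ?_
          have ht : ∀ t : Fin d → Fin p,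
              (fun n : Fin (d+1) → Fin p =>
                if ((∀ i j : Fin (d+1), i < j → n i < n j) ∧ ∀ i, lo < ((n i : Fin p) : ℕ))
                then ∏ i, (((n i : ℕ) : RatFunc (ZMod p)) - x i)⁻¹ else 0) (Fin.cons k t)
              = if lo < (k:ℕ) then (((k:ℕ) : RatFunc (ZMod p)) - x 0)⁻¹ *
                  (if ((∀ i j : Fin d, i < j → t i < t j) ∧ ∀ i, (k:ℕ) < ((t i : Fin p) : ℕ))
                   then ∏ i : Fin d, (((t i : ℕ) : RatFunc (ZMod p)) - x i.succ)⁻¹ else 0)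
                else 0 := by
            intro t
            simp only
            rw [if_congr (cons_cond p lo k t) rfl rfl, Fin.prod_univ_succ, Fin.cons_zero]
            simp only [Fin.cons_succ]
            exact ite_and_mul _ _ _ _
          rw [Finset.sum_congr rfl fun t _ => ht t]
          by_cases hA : lo < (k:ℕ)
          · simp only [hA, if_true, ← Finset.mul_sum]
            rw [fAux, Finset.sum_filter]
          · simp [hA]
      _ = ∑ m ∈ Finset.range p,
            if lo < m then ((m : RatFunc (ZMod p)) - x 0)⁻¹ * fAux p m (fun i => x i.succ) else 0 :=
          Fin.sum_univ_eq_sum_range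
            (fun m => if lo < m then ((m : RatFunc (ZMod p)) - x 0)⁻¹ * fAux p m (fun i => x i.succ) else 0) p
      _ = ∑ m ∈ Finset.Ico (lo+1) p,
            ((m : RatFunc (ZMod p)) - x 0)⁻¹ * fAux p m (fun i => x i.succ) := by
          rw [← Finset.sum_filter]
          congr 1
          ext m
          simp only [Finset.mem_filter, Finset.mem_range, Finset.mem_Ico]
          omega
      _ = D p lo p (List.ofFn x) := by
          rw [List.ofFn_succ, D_cons]
          exact Finset.sum_congr rfl fun m _ => by rw [ih]

lemma f_eq_D {d : ℕ} (x : Fin d → RatFunc (ZMod p)) : f p x = D p 0 p (List.ofFn x) := by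
  rw [f_eq_fAux, fAux_eq_D]

lemma D_zero_of_ge {lo hi : ℕ} (h : hi ≤ lo + 1) (c : RatFunc (ZMod p)) (cs : List (RatFunc (ZMod p))) :
    D p lo hi (c :: cs) = 0 := by
  rw [D_cons, Finset.Ico_eq_empty (by omega), Finset.sum_empty]

lemma D_zero_of_ge' {lo hi : ℕ} (h : hi ≤ lo + 1) (l : List (RatFunc (ZMod p))) (hl : l ≠ []) :
    D p lo hi l = 0 := by
  cases l with
  | nil => exact absurd rfl hl
  | cons c cs => exact D_zero_of_ge p h c cs

lemma sum_Ico_swap {M : Type*} [AddCommMonoid M] (l h : ℕ) (g : ℕ → ℕ → M) :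
    ∑ n ∈ Finset.Ico l h, ∑ m ∈ Finset.Ico (n+1) h, g n m
      = ∑ m ∈ Finset.Ico l h, ∑ n ∈ Finset.Ico l m, g n m := by
  have L : ∀ n ∈ Finset.Ico l h, ∑ m ∈ Finset.Ico (n+1) h, g n m
      = ∑ m ∈ Finset.Ico l h, if n < m then g n m else 0 := by
    intro n hn
    rw [← Finset.sum_filter]
    apply Finset.sum_congr _ (fun _ _ => rfl)
    simp only [Finset.mem_Ico] at hn
    ext m
    simp only [Finset.mem_filter, Finset.mem_Ico]
    omega
  have R : ∀ m ∈ Finset.Ico l h, ∑ n ∈ Finset.Ico l m, g n m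
      = ∑ n ∈ Finset.Ico l h, if n < m then g n m else 0 := by
    intro m hm
    rw [← Finset.sum_filter]
    apply Finset.sum_congr _ (fun _ _ => rfl)
    simp only [Finset.mem_Ico] at hm
    ext n
    simp only [Finset.mem_filter, Finset.mem_Ico]
    omega
  rw [Finset.sum_congr rfl L, Finset.sum_congr rfl R, Finset.sum_comm]

lemma D_split (hi : ℕ) (c : RatFunc (ZMod p)) (v : List (RatFunc (ZMod p))) :
    ∀ (u : List (RatFunc (ZMod p))) (lo : ℕ),
    D p lo hi (u ++ c :: v)
      = ∑ m ∈ Finset.Ico (lo + 1) hi, D p lo m u * (((m : RatFunc (ZMod p)) - c)⁻¹ * D p m hi v) := by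
  intro u
  induction u with
  | nil =>
    intro lo
    simp [D_cons]
  | cons c' u' ih =>
    intro lo
    rw [List.cons_append, D_cons]
    rw [Finset.sum_congr rfl fun n _ => by rw [ih n]]
    rw [Finset.sum_congr rfl fun n _ => (Finset.mul_sum _ _ _)]
    rw [sum_Ico_swap]
    refine Finset.sum_congr rfl fun m _ => ?_
    rw [D_cons, Finset.sum_mul]
    refine Finset.sum_congr rfl fun n _ => ?_
    ring

lemma D_last (c : RatFunc (ZMod p)) :
    ∀ (cs : List (RatFunc (ZMod p))) (lo m : ℕ), lo < m →
    D p lo (m+1) (cs ++ [c]) = D p lo m (cs ++ [c]) + D p lo m cs * ((m : RatFunc (ZMod p)) - c)⁻¹ := by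
  intro cs
  induction cs with
  | nil =>
    intro lo m hlm
    simp only [List.nil_append, D_cons, D_nil]
    rw [Finset.sum_Ico_succ_top (by omega : lo + 1 ≤ m)]
    simp [mul_comm]
  | cons c' cs ih =>
    intro lo m hlm
    rw [List.cons_append, D_cons, Finset.sum_Ico_succ_top (by omega : lo + 1 ≤ m)]
    rw [D_zero_of_ge' p le_rfl (cs ++ [c]) (by simp), mul_zero, add_zero]
    rw [Finset.sum_congr rfl fun n hn => by
      rw [ih n m (by simpa using (Finset.mem_Ico.mp hn).2), mul_add, ← mul_assoc]]
    rw [Finset.sum_add_distrib, ← Finset.sum_mul]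
    rw [D_cons, D_cons]

lemma D_last' (c : RatFunc (ZMod p)) (cs : List (RatFunc (ZMod p))) (m : ℕ) (hm : 1 ≤ m) :
    D p 0 (m+1) (cs ++ [c]) - D p 0 m (cs ++ [c]) = D p 0 m cs * ((m : RatFunc (ZMod p)) - c)⁻¹ := by
  rw [D_last p c cs 0 m hm]
  ring

lemma D_first (lo hi : ℕ) (h : lo + 1 < hi) (c : RatFunc (ZMod p)) (cs : List (RatFunc (ZMod p))) :
    D p lo hi (c :: cs)
      = (((lo + 1 : ℕ) : RatFunc (ZMod p)) - c)⁻¹ * D p (lo+1) hi cs + D p (lo+1) hi (c :: cs) := by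
  rw [D_cons, Finset.sum_eq_sum_Ico_succ_bot h, D_cons]

lemma D_first' (m : ℕ) (hm : 1 ≤ m) (hmp : m < p) (c : RatFunc (ZMod p)) (cs : List (RatFunc (ZMod p))) :
    D p (m-1) p (c :: cs) - D p m p (c :: cs) = ((m : RatFunc (ZMod p)) - c)⁻¹ * D p m p cs := by
  have h1 : m - 1 + 1 = m := by omega
  have h := D_first p (m-1) p (by omega) c cs
  rw [h1] at h
  rw [h]
  ring

lemma sum_telescope_Ico {M : Type*} [AddCommGroup M] (g : ℕ → M) {l h : ℕ} (hlh : l ≤ h) :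
    ∑ m ∈ Finset.Ico l h, (g (m+1) - g m) = g h - g l := by
  rw [Finset.sum_Ico_eq_sub _ hlh, Finset.sum_range_sub, Finset.sum_range_sub]
  abel



lemma linear_ne_zero (v u : ZMod p) (hu : u ≠ 0) :
    RatFunc.C v + RatFunc.C u * RatFunc.X ≠ 0 := by
  rw [← RatFunc.algebraMap_C (K := ZMod p) v, ← RatFunc.algebraMap_C (K := ZMod p) u,
    ← RatFunc.algebraMap_X (K := ZMod p), ← map_mul, ← map_add]
  intro h
  have h2 : (Polynomial.C v + Polynomial.C u * Polynomial.X : Polynomial (ZMod p)) = 0 :=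
    RatFunc.algebraMap_injective (ZMod p) (by simpa using h)
  have h3 := congrArg (fun q : Polynomial (ZMod p) => q.coeff 1) h2
  simp [Polynomial.coeff_C] at h3
  exact hu h3

lemma natCast_eq_C (m : ℕ) : ((m : ℕ) : RatFunc (ZMod p)) = RatFunc.C ((m : ZMod p)) :=
  (map_natCast (RatFunc.C) m).symm

lemma zmod_two_ne_zero (hp2 : p ≠ 2) : (2 : ZMod p) ≠ 0 := by
  have hp := (Fact.out : p.Prime)
  intro h
  have hd : (p : ℕ) ∣ 2 := (ZMod.natCast_eq_zero_iff 2 p).mp (by exact_mod_cast h)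
  exact hp2 ((Nat.prime_dvd_prime_iff_eq hp Nat.prime_two).mp hd)

lemma ne_mX (m : ℕ) : ((m : ℕ) : RatFunc (ZMod p)) - RatFunc.X ≠ 0 := by
  have h : ((m : ℕ) : RatFunc (ZMod p)) - RatFunc.X
      = RatFunc.C ((m : ZMod p)) + RatFunc.C (-1) * RatFunc.X := by
    rw [natCast_eq_C, map_neg, map_one]; ring
  rw [h]
  exact linear_ne_zero p _ _ (by simp)

lemma ne_m2X (hp2 : p ≠ 2) (m : ℕ) : ((m : ℕ) : RatFunc (ZMod p)) - 2 * RatFunc.X ≠ 0 := by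
  have h : ((m : ℕ) : RatFunc (ZMod p)) - 2 * RatFunc.X
      = RatFunc.C ((m : ZMod p)) + RatFunc.C (-2) * RatFunc.X := by
    rw [natCast_eq_C, map_neg, map_ofNat]; push_cast; ring
  rw [h]
  exact linear_ne_zero p _ _ (neg_ne_zero.mpr (zmod_two_ne_zero p hp2))

lemma ne_m2X1 (hp2 : p ≠ 2) (m : ℕ) :
    ((m : ℕ) : RatFunc (ZMod p)) - (2 * RatFunc.X - 1) ≠ 0 := by
  have h : ((m : ℕ) : RatFunc (ZMod p)) - (2 * RatFunc.X - 1)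
      = RatFunc.C ((m : ZMod p) + 1) + RatFunc.C (-2) * RatFunc.X := by
    rw [natCast_eq_C, map_neg, map_ofNat, map_add, map_one]; push_cast; ring
  rw [h]
  exact linear_ne_zero p _ _ (neg_ne_zero.mpr (zmod_two_ne_zero p hp2))

lemma ne_m1_2X (hp2 : p ≠ 2) (m : ℕ) :
    ((m : ℕ) : RatFunc (ZMod p)) + 1 - 2 * RatFunc.X ≠ 0 := by
  have h : ((m : ℕ) : RatFunc (ZMod p)) + 1 - 2 * RatFunc.X
      = ((m : ℕ) : RatFunc (ZMod p)) - (2 * RatFunc.X - 1) := by ring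
  rw [h]
  exact ne_m2X1 p hp2 m

lemma ne_X : (RatFunc.X : RatFunc (ZMod p)) ≠ 0 := by
  have h : (RatFunc.X : RatFunc (ZMod p)) = RatFunc.C 0 + RatFunc.C 1 * RatFunc.X := by
    rw [map_zero, map_one]; ring
  rw [h]
  exact linear_ne_zero p _ _ one_ne_zero

lemma ne_X1 : (RatFunc.X : RatFunc (ZMod p)) - 1 ≠ 0 := by
  have h : (RatFunc.X : RatFunc (ZMod p)) - 1 = RatFunc.C (-1) + RatFunc.C 1 * RatFunc.X := by
    rw [map_neg, map_one]; ring
  rw [h]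
  exact linear_ne_zero p _ _ one_ne_zero

lemma ne_2X1 (hp2 : p ≠ 2) : 2 * (RatFunc.X : RatFunc (ZMod p)) - 1 ≠ 0 := by
  have h : 2 * (RatFunc.X : RatFunc (ZMod p)) - 1 = RatFunc.C (-1) + RatFunc.C 2 * RatFunc.X := by
    rw [map_neg, map_one, map_ofNat]; push_cast; ring
  rw [h]
  exact linear_ne_zero p _ _ (zmod_two_ne_zero p hp2)

lemma ne_1_2X (hp2 : p ≠ 2) : 1 - 2 * (RatFunc.X : RatFunc (ZMod p)) ≠ 0 := by
  intro h
  apply ne_2X1 p hp2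
  linear_combination -h

lemma ne_two (hp2 : p ≠ 2) : (2 : RatFunc (ZMod p)) ≠ 0 := by
  intro h
  apply zmod_two_ne_zero p hp2
  have h2 : RatFunc.C (2 : ZMod p) = RatFunc.C (0 : ZMod p) := by
    rw [map_ofNat, map_zero]; exact_mod_cast h
  have hinj : Function.Injective (RatFunc.C (K := ZMod p)) := by
    intro a b hab
    have := RatFunc.algebraMap_injective (ZMod p)
      (by rw [RatFunc.algebraMap_C, RatFunc.algebraMap_C, hab] :
        algebraMap _ _ (Polynomial.C a) = algebraMap _ _ (Polynomial.C b))
    exact Polynomial.C_injective this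
  exact hinj h2

lemma cast_p_eq_zero : ((p : ℕ) : RatFunc (ZMod p)) = 0 := by
  rw [natCast_eq_C, ZMod.natCast_self, map_zero]


lemma ofFn_ite {α : Type*} (a b : ℕ) (c t : α) :
    List.ofFn (fun i : Fin (a+b+1) => if (i : ℕ) = a then c else t)
      = List.replicate a t ++ c :: List.replicate b t := by
  apply List.ext_getElem
  · simp
    omega
  · intro i h1 h2
    simp only [List.getElem_ofFn]
    by_cases hia : i < a
    · rw [List.getElem_append_left (by simpa using hia), List.getElem_replicate]
      exact if_neg (show ¬ (i = a) by omega)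
    · rw [List.getElem_append_right (by simpa using hia)]
      by_cases hia2 : i = a
      · have h0 : i - (List.replicate a t).length = 0 := by simp; omega
        simp [h0, hia2]
      · have h0 : i - (List.replicate a t).length = (i - a - 1) + 1 := by simp; omega
        simp only [h0, List.getElem_cons_succ, List.getElem_replicate]
        exact if_neg (show ¬ (i = a) by omega)


lemma f_congr_dim {d d' : ℕ} (h : d = d') (x : Fin d → RatFunc (ZMod p))
    (x' : Fin d' → RatFunc (ZMod p))
    (hx : ∀ i : Fin d', x (Fin.cast h.symm i) = x' i) : f p x = f p x' := by
  subst h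
  exact congrArg (f p) (funext fun i => hx i)

lemma f_mid_eq_D (a b : ℕ) (c : RatFunc (ZMod p)) :
    f p (fun i : Fin ((a : ℤ) + (b : ℤ) + 1).toNat => if (i : ℤ) = (a : ℤ) then c else RatFunc.X)
      = D p 0 p (List.replicate a RatFunc.X ++ c :: List.replicate b RatFunc.X) := by
  rw [f_congr_dim p (show ((a : ℤ) + (b : ℤ) + 1).toNat = a + b + 1 by omega) _
      (fun i : Fin (a+b+1) => if (i : ℕ) = a then c else RatFunc.X) ?_]
  · rw [f_eq_D, ofFn_ite]
  · intro i
    simp only [Fin.coe_cast]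
    exact if_congr Int.natCast_inj rfl rfl

lemma f_const_eq_D (k : ℕ) :
    f p (fun _ : Fin k => RatFunc.X) = D p 0 p (List.replicate k RatFunc.X) := by
  rw [f_eq_D, List.ofFn_const]

lemma S_nat (a b : ℕ) : S p a b RatFunc.X
    = D p 0 p (List.replicate a RatFunc.X ++ (2 * RatFunc.X - 1) :: List.replicate b RatFunc.X) := by
  rw [S, if_pos ⟨Int.natCast_nonneg a, Int.natCast_nonneg b⟩, f_mid_eq_D]

lemma G_nat (a b : ℕ) : G p a b RatFunc.X
    = D p 0 p (List.replicate a RatFunc.X ++ (2 * RatFunc.X) :: List.replicate b RatFunc.X) := by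
  rw [G, if_pos ⟨Int.natCast_nonneg a, Int.natCast_nonneg b⟩, f_mid_eq_D]

lemma S_negone (b : ℕ) : S p (-1) b RatFunc.X
    = RatFunc.X / (2 * RatFunc.X - 1) * D p 0 p (List.replicate b RatFunc.X) := by
  rw [S, if_neg (fun h => by omega)]
  congr 1
  rw [f_congr_dim p (show ((-1 : ℤ) + (b : ℤ) + 1).toNat = b by omega) _
      (fun _ : Fin b => RatFunc.X) (fun i => rfl), f_const_eq_D]

lemma G_negone (a : ℕ) : G p a (-1) RatFunc.X
    = 1 / 2 * D p 0 p (List.replicate a RatFunc.X) := by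
  rw [G, if_neg (fun h => by omega)]
  congr 1
  rw [f_congr_dim p (show ((a : ℤ) + (-1 : ℤ) + 1).toNat = a by omega) _
      (fun _ : Fin a => RatFunc.X) (fun i => rfl), f_const_eq_D]

lemma D_split0 (hi : ℕ) (c : RatFunc (ZMod p)) (v u : List (RatFunc (ZMod p))) :
    D p 0 hi (u ++ c :: v)
      = ∑ m ∈ Finset.Ico 1 hi, D p 0 m u * (((m : RatFunc (ZMod p)) - c)⁻¹ * D p m hi v) := by
  simpa using D_split p hi c v u 0

lemma core (a b : ℕ) :
    D p 0 p (List.replicate a RatFunc.X ++ (2 * RatFunc.X - 1) :: List.replicate b RatFunc.X)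
      - D p 0 p (List.replicate a RatFunc.X ++ (2 * RatFunc.X) :: List.replicate b RatFunc.X)
    = (D p 0 p (List.replicate a RatFunc.X)
          * (((p : ℕ) : RatFunc (ZMod p)) - 2 * RatFunc.X)⁻¹
          * D p (p-1) p (List.replicate b RatFunc.X)
        - D p 0 1 (List.replicate a RatFunc.X)
          * (((1 : ℕ) : RatFunc (ZMod p)) - 2 * RatFunc.X)⁻¹
          * D p 0 p (List.replicate b RatFunc.X))
      - ∑ m ∈ Finset.Ico 1 p,
          (D p 0 (m+1) (List.replicate a RatFunc.X) - D p 0 m (List.replicate a RatFunc.X))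
            * (((m : RatFunc (ZMod p)) - (2 * RatFunc.X - 1))⁻¹ * D p m p (List.replicate b RatFunc.X))
      + ∑ m ∈ Finset.Ico 1 p,
          D p 0 m (List.replicate a RatFunc.X)
            * (((m : RatFunc (ZMod p)) - 2 * RatFunc.X)⁻¹
              * (D p (m-1) p (List.replicate b RatFunc.X) - D p m p (List.replicate b RatFunc.X))) := by
  have hp1 : 1 ≤ p := (Fact.out : p.Prime).pos
  set gd : ℕ → RatFunc (ZMod p) := fun k =>
    D p 0 k (List.replicate a RatFunc.X)
      * (((k : ℕ) : RatFunc (ZMod p)) - 2 * RatFunc.X)⁻¹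
      * D p (k-1) p (List.replicate b RatFunc.X) with hgd
  rw [D_split0, D_split0, ← Finset.sum_sub_distrib]
  have key : ∀ m ∈ Finset.Ico 1 p,
      D p 0 m (List.replicate a RatFunc.X)
          * (((m : RatFunc (ZMod p)) - (2 * RatFunc.X - 1))⁻¹ * D p m p (List.replicate b RatFunc.X))
        - D p 0 m (List.replicate a RatFunc.X)
          * (((m : RatFunc (ZMod p)) - 2 * RatFunc.X)⁻¹ * D p m p (List.replicate b RatFunc.X))
      = (gd (m+1) - gd m)
        - (D p 0 (m+1) (List.replicate a RatFunc.X) - D p 0 m (List.replicate a RatFunc.X))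
            * (((m : RatFunc (ZMod p)) - (2 * RatFunc.X - 1))⁻¹ * D p m p (List.replicate b RatFunc.X))
        + D p 0 m (List.replicate a RatFunc.X)
            * (((m : RatFunc (ZMod p)) - 2 * RatFunc.X)⁻¹
              * (D p (m-1) p (List.replicate b RatFunc.X) - D p m p (List.replicate b RatFunc.X))) := by
    intro m hm
    simp only [hgd, Nat.add_sub_cancel]
    have hc : ((m : ℕ) : RatFunc (ZMod p)) - (2 * RatFunc.X - 1)
        = (((m+1 : ℕ)) : RatFunc (ZMod p)) - 2 * RatFunc.X := by push_cast; ring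
    rw [hc]
    ring
  rw [Finset.sum_congr rfl key, Finset.sum_add_distrib, Finset.sum_sub_distrib,
    sum_telescope_Ico gd hp1]

lemma rep_merge (k l : ℕ) : List.replicate k (RatFunc.X (K := ZMod p)) ++ RatFunc.X :: List.replicate l RatFunc.X
    = List.replicate (k + l + 1) RatFunc.X := by
  rw [← List.replicate_succ, ← List.replicate_add]
  congr 1

lemma sumA_zero (v : List (RatFunc (ZMod p))) :
    ∑ m ∈ Finset.Ico 1 p,
      (D p 0 (m+1) (List.replicate 0 RatFunc.X) - D p 0 m (List.replicate 0 RatFunc.X))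
        * (((m : RatFunc (ZMod p)) - (2 * RatFunc.X - 1))⁻¹ * D p m p v) = 0 :=
  Finset.sum_eq_zero fun m _ => by simp

lemma sumB_zero (u : List (RatFunc (ZMod p))) :
    ∑ m ∈ Finset.Ico 1 p,
      D p 0 m u * (((m : RatFunc (ZMod p)) - 2 * RatFunc.X)⁻¹
        * (D p (m-1) p (List.replicate 0 RatFunc.X) - D p m p (List.replicate 0 RatFunc.X))) = 0 :=
  Finset.sum_eq_zero fun m _ => by simp

lemma sumA_eval (hp2 : p ≠ 2) (a' : ℕ) (v : List (RatFunc (ZMod p))) :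
    ∑ m ∈ Finset.Ico 1 p,
      (D p 0 (m+1) (List.replicate (a'+1) RatFunc.X) - D p 0 m (List.replicate (a'+1) RatFunc.X))
        * (((m : RatFunc (ZMod p)) - (2 * RatFunc.X - 1))⁻¹ * D p m p v)
    = (RatFunc.X - 1)⁻¹ * D p 0 p (List.replicate a' RatFunc.X ++ (2 * RatFunc.X - 1) :: v)
      - (RatFunc.X - 1)⁻¹ * D p 0 p (List.replicate a' RatFunc.X ++ RatFunc.X :: v) := by
  have e1 : ∀ m ∈ Finset.Ico 1 p,
      (D p 0 (m+1) (List.replicate (a'+1) RatFunc.X) - D p 0 m (List.replicate (a'+1) RatFunc.X))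
        * (((m : RatFunc (ZMod p)) - (2 * RatFunc.X - 1))⁻¹ * D p m p v)
      = (RatFunc.X - 1)⁻¹ * (D p 0 m (List.replicate a' RatFunc.X)
            * (((m : RatFunc (ZMod p)) - (2 * RatFunc.X - 1))⁻¹ * D p m p v))
        - (RatFunc.X - 1)⁻¹ * (D p 0 m (List.replicate a' RatFunc.X)
            * (((m : RatFunc (ZMod p)) - RatFunc.X)⁻¹ * D p m p v)) := by
    intro m hm
    obtain ⟨hm1, _⟩ := Finset.mem_Ico.mp hm
    rw [List.replicate_succ' (n := a') (a := RatFunc.X), D_last' p RatFunc.X (List.replicate a' RatFunc.X) m hm1]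
    have h1 := ne_mX p m
    have h2 := ne_m2X1 p hp2 m
    have h3 := ne_X1 p
    have hw := inv_mul_cancel₀ h2
    field_simp
    linear_combination (-(D p 0 m (List.replicate a' RatFunc.X) * D p m p v)) * hw
  rw [Finset.sum_congr rfl e1, Finset.sum_sub_distrib, ← Finset.mul_sum, ← Finset.mul_sum,
    ← D_split0, ← D_split0]

lemma sumB_eval (hp2 : p ≠ 2) (b' : ℕ) (u : List (RatFunc (ZMod p))) :
    ∑ m ∈ Finset.Ico 1 p,
      D p 0 m u * (((m : RatFunc (ZMod p)) - 2 * RatFunc.X)⁻¹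
        * (D p (m-1) p (List.replicate (b'+1) RatFunc.X) - D p m p (List.replicate (b'+1) RatFunc.X)))
    = RatFunc.X⁻¹ * D p 0 p (u ++ (2 * RatFunc.X) :: List.replicate b' RatFunc.X)
      - RatFunc.X⁻¹ * D p 0 p (u ++ RatFunc.X :: List.replicate b' RatFunc.X) := by
  have e1 : ∀ m ∈ Finset.Ico 1 p,
      D p 0 m u * (((m : RatFunc (ZMod p)) - 2 * RatFunc.X)⁻¹
        * (D p (m-1) p (List.replicate (b'+1) RatFunc.X) - D p m p (List.replicate (b'+1) RatFunc.X)))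
      = RatFunc.X⁻¹ * (D p 0 m u
            * (((m : RatFunc (ZMod p)) - 2 * RatFunc.X)⁻¹ * D p m p (List.replicate b' RatFunc.X)))
        - RatFunc.X⁻¹ * (D p 0 m u
            * (((m : RatFunc (ZMod p)) - RatFunc.X)⁻¹ * D p m p (List.replicate b' RatFunc.X))) := by
    intro m hm
    obtain ⟨hm1, hmp⟩ := Finset.mem_Ico.mp hm
    rw [List.replicate_succ, D_first' p m hm1 hmp RatFunc.X (List.replicate b' RatFunc.X)]
    have h1 := ne_mX p m
    have h2 := ne_m2X p hp2 m
    have h3 := ne_X p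
    field_simp
    ring
  rw [Finset.sum_congr rfl e1, Finset.sum_sub_distrib, ← Finset.mul_sum, ← Finset.mul_sum,
    ← D_split0, ← D_split0]

/-- For an odd prime `p` and integers `a, b ≥ 0` with `a + b < p`, one has in `𝔽_p(x)`:
`S_{a,b}(x) - G_{a,b}(x) = (x(x-1))⁻¹ f(x,…,x) - (x-1)⁻¹ S_{a-1,b}(x) + x⁻¹ G_{a,b-1}(x)`,
with `a + b` copies of `x` in `f(x,…,x)`. -/
theorem S_sub_G_identity (p : ℕ) [Fact p.Prime] (hp2 : p ≠ 2) (a b : ℕ) (hab : a + b < p) :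
    S p a b RatFunc.X - G p a b RatFunc.X
      = (RatFunc.X * (RatFunc.X - 1))⁻¹ * f p (fun _ : Fin (a + b) => RatFunc.X)
        - (RatFunc.X - 1)⁻¹ * S p ((a : ℤ) - 1) b RatFunc.X
        + (RatFunc.X)⁻¹ * G p a ((b : ℤ) - 1) RatFunc.X := by
  have hp1 : 1 ≤ p := (Fact.out : p.Prime).pos
  have hX := ne_X p
  have hX1 := ne_X1 p
  have h2X1 := ne_2X1 p hp2
  have h12X := ne_1_2X p hp2
  have h2 := ne_two p hp2
  have h2X : (2 * RatFunc.X : RatFunc (ZMod p)) ≠ 0 := mul_ne_zero h2 hX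
  have h02X : ((0 : RatFunc (ZMod p)) - 2 * RatFunc.X) ≠ 0 := by
    rw [zero_sub]
    exact neg_ne_zero.mpr h2X
  rcases a with _ | a' <;> rcases b with _ | b'
  · -- a = 0, b = 0
    rw [S_nat p 0 0, G_nat p 0 0]
    rw [show ((0:ℕ):ℤ) - 1 = (-1 : ℤ) by norm_num]
    rw [S_negone p 0, G_negone p 0]
    rw [f_const_eq_D p (0+0)]
    rw [core p 0 0]
    rw [sumA_zero p (List.replicate 0 RatFunc.X), sumB_zero p (List.replicate 0 RatFunc.X)]
    rw [cast_p_eq_zero p]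
    simp only [List.replicate_zero, D_nil, Nat.cast_one, mul_one, one_mul, add_zero, sub_zero,
      Nat.add_zero]
    field_simp
    ring
  · -- a = 0, b = b'+1
    rw [S_nat p 0 (b'+1), G_nat p 0 (b'+1)]
    rw [show ((0:ℕ):ℤ) - 1 = (-1 : ℤ) by norm_num]
    rw [S_negone p (b'+1)]
    rw [show (((b'+1 : ℕ)):ℤ) - 1 = ((b' : ℕ) : ℤ) by push_cast; ring]
    rw [G_nat p 0 b']
    rw [f_const_eq_D p (0 + (b'+1))]
    rw [core p 0 (b'+1)]
    rw [sumA_zero p (List.replicate (b'+1) RatFunc.X)]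
    rw [sumB_eval p hp2 b' (List.replicate 0 RatFunc.X)]
    rw [rep_merge p 0 b']
    rw [show D p (p-1) p (List.replicate (b'+1) RatFunc.X) = 0 from
      D_zero_of_ge' p (by omega) _ (by simp)]
    rw [show (0 + (b'+1) : ℕ) = 0+b'+1 from rfl]
    rw [show ((0:ℕ)+b'+1) = b'+1 by omega]
    simp only [List.replicate_zero, D_nil, Nat.cast_one, mul_one, one_mul, mul_zero, zero_mul,
      zero_sub, sub_zero, zero_add, List.nil_append]
    set F := D p 0 p (List.replicate (b'+1) RatFunc.X)
    set Sp := D p 0 p ((2 * RatFunc.X - 1) :: List.replicate b' RatFunc.X)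
    set Gp := D p 0 p ((2 * RatFunc.X) :: List.replicate b' RatFunc.X)
    field_simp
    ring
  · -- a = a'+1, b = 0
    rw [S_nat p (a'+1) 0, G_nat p (a'+1) 0]
    rw [show (((a'+1 : ℕ)):ℤ) - 1 = ((a' : ℕ) : ℤ) by push_cast; ring]
    rw [S_nat p a' 0]
    rw [show ((0:ℕ):ℤ) - 1 = (-1 : ℤ) by norm_num]
    rw [G_negone p (a'+1)]
    rw [f_const_eq_D p ((a'+1) + 0)]
    rw [core p (a'+1) 0]
    rw [sumB_zero p (List.replicate (a'+1) RatFunc.X)]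
    rw [sumA_eval p hp2 a' (List.replicate 0 RatFunc.X)]
    rw [rep_merge p a' 0]
    rw [show D p 0 1 (List.replicate (a'+1) RatFunc.X) = 0 from
      D_zero_of_ge' p le_rfl _ (by simp)]
    rw [cast_p_eq_zero p]
    rw [show ((a'+1) + 0 : ℕ) = a' + 0 + 1 by omega]
    simp only [List.replicate_zero, D_nil, Nat.cast_one, mul_one, one_mul, mul_zero, zero_mul,
      sub_zero, zero_add, add_zero, zero_sub]
    set F := D p 0 p (List.replicate (a'+0+1) RatFunc.X)
    set Sp := D p 0 p (List.replicate a' RatFunc.X ++ (2 * RatFunc.X - 1) :: List.replicate 0 RatFunc.X)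
    set Ga := D p 0 p (List.replicate (a'+1) RatFunc.X ++ (2 * RatFunc.X) :: List.replicate 0 RatFunc.X)
    field_simp
    ring
  · -- a = a'+1, b = b'+1
    rw [S_nat p (a'+1) (b'+1), G_nat p (a'+1) (b'+1)]
    rw [show (((a'+1 : ℕ)):ℤ) - 1 = ((a' : ℕ) : ℤ) by push_cast; ring]
    rw [S_nat p a' (b'+1)]
    rw [show (((b'+1 : ℕ)):ℤ) - 1 = ((b' : ℕ) : ℤ) by push_cast; ring]
    rw [G_nat p (a'+1) b']
    rw [f_const_eq_D p ((a'+1) + (b'+1))]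
    rw [core p (a'+1) (b'+1)]
    rw [sumA_eval p hp2 a' (List.replicate (b'+1) RatFunc.X)]
    rw [sumB_eval p hp2 b' (List.replicate (a'+1) RatFunc.X)]
    rw [rep_merge p a' (b'+1), rep_merge p (a'+1) b']
    rw [show D p (p-1) p (List.replicate (b'+1) RatFunc.X) = 0 from
      D_zero_of_ge' p (by omega) _ (by simp)]
    rw [show D p 0 1 (List.replicate (a'+1) RatFunc.X) = 0 from
      D_zero_of_ge' p le_rfl _ (by simp)]
    rw [show (a' + (b'+1) + 1 : ℕ) = (a'+1) + (b'+1) by omega]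
    rw [show ((a'+1) + b' + 1 : ℕ) = (a'+1) + (b'+1) by omega]
    set F := D p 0 p (List.replicate ((a'+1) + (b'+1)) RatFunc.X)
    set Sp := D p 0 p (List.replicate a' RatFunc.X ++ (2 * RatFunc.X - 1) :: List.replicate (b'+1) RatFunc.X)
    set Gp := D p 0 p (List.replicate (a'+1) RatFunc.X ++ (2 * RatFunc.X) :: List.replicate b' RatFunc.X)
    field_simp
    ring
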